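/- Let A ∈ GL(m,ℂ), Ω₁ a complex diagonal matrix and Ω₂ a real diagonal matrix with positive entries, C₁ = A Ω₁ Aᴴ and C₂ = A Ω₂ Aᵀ. Let C₂ = U Σ Uᵀ with U unitary and Σ positive diagonal. Then C̃₁ := Σ^{-1/2} Uᴴ C₁ U Σ^{-1/2} can be written as V Λ Vᴴ with V complex orthogonal (Vᵀ V = I) and Λ = Ω₂^{-1/2} Ω₁ Ω₂^{-1/2} diagonal. -/

import Mathlib

open Matrix Complex

/-- With `C₁ = A Ω₁ Aᴴ`, `C₂ = A Ω₂ Aᵀ`, and a Takagi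
factorization `C₂ = U Σ Uᵀ`, the matrix `C̃₁ = Σ^{-1/2} Uᴴ C₁ U Σ^{-1/2}` can
be written as `V Λ Vᴴ` with `V` complex orthogonal and
`Λ = Ω₂^{-1/2} Ω₁ Ω₂^{-1/2}` diagonal. -/
theorem stmt_10 (m : ℕ) (A U : Matrix (Fin m) (Fin m) ℂ)
    (ω₁ : Fin m → ℂ) (ω₂ σ : Fin m → ℝ)
    (hA : IsUnit A.det)
    (hω₂ : ∀ i, 0 < ω₂ i) (hσ : ∀ i, 0 < σ i)
    (hU : U ∈ Matrix.unitaryGroup (Fin m) ℂ)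
    (hTakagi : A * Matrix.diagonal (fun i => (ω₂ i : ℂ)) * Aᵀ =
      U * Matrix.diagonal (fun i => (σ i : ℂ)) * Uᵀ) :
    ∃ V : Matrix (Fin m) (Fin m) ℂ, Vᵀ * V = 1 ∧
      Matrix.diagonal (fun i => ((Real.sqrt (σ i))⁻¹ : ℂ)) * Uᴴ *
          (A * Matrix.diagonal ω₁ * Aᴴ) * U *
          Matrix.diagonal (fun i => ((Real.sqrt (σ i))⁻¹ : ℂ)) =
        V * Matrix.diagonal (fun i => ((Real.sqrt (ω₂ i))⁻¹ : ℂ) * ω₁ i *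
          ((Real.sqrt (ω₂ i))⁻¹ : ℂ)) * Vᴴ := by
  set Dσ : Matrix (Fin m) (Fin m) ℂ :=
    Matrix.diagonal (fun i => ((Real.sqrt (σ i))⁻¹ : ℂ)) with hDσ
  set Dω : Matrix (Fin m) (Fin m) ℂ :=
    Matrix.diagonal (fun i => ((Real.sqrt (ω₂ i)) : ℂ)) with hDω
  set V : Matrix (Fin m) (Fin m) ℂ := Dσ * Uᴴ * A * Dω with hV
  have hUU : Uᴴ * U = 1 := mem_unitaryGroup_iff'.mp hU
  have hDωsq : Dω * Dω = Matrix.diagonal (fun i => (ω₂ i : ℂ)) := by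
    rw [hDω, diagonal_mul_diagonal]
    refine congrArg Matrix.diagonal (funext fun i => ?_)
    rw [← Complex.ofReal_mul, Real.mul_self_sqrt (hω₂ i).le]
  -- Dσᵀ = Dσ, Dωᵀ = Dω
  have hDσt : Dσᵀ = Dσ := diagonal_transpose _
  have hDωt : Dωᵀ = Dω := diagonal_transpose _
  have hDσh : Dσᴴ = Dσ := by
    rw [hDσ, diagonal_conjTranspose]
    refine congrArg Matrix.diagonal (funext fun i => ?_)
    simp [Complex.conj_ofReal]
  have hDωh : Dωᴴ = Dω := by
    rw [hDω, diagonal_conjTranspose]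
    refine congrArg Matrix.diagonal (funext fun i => ?_)
    simp [Complex.conj_ofReal]
  have hDsS : Dσ * Matrix.diagonal (fun i => (σ i : ℂ)) * Dσ = 1 := by
    rw [hDσ, diagonal_mul_diagonal, diagonal_mul_diagonal]
    rw [← Matrix.diagonal_one]
    refine congrArg Matrix.diagonal (funext fun i => ?_)
    have hne : (Real.sqrt (σ i) : ℂ) ≠ 0 := by
      exact_mod_cast (Real.sqrt_pos.mpr (hσ i)).ne'
    field_simp
    rw [← Complex.ofReal_pow, Real.sq_sqrt (hσ i).le]
  have hVVt : V * Vᵀ = 1 := by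
    have ht : Vᵀ = Dω * Aᵀ * (Uᴴ)ᵀ * Dσ := by
      rw [hV, transpose_mul, transpose_mul, transpose_mul, hDσt, hDωt]
      noncomm_ring
    rw [hV, ht]
    have key : Dσ * Uᴴ * A * Dω * (Dω * Aᵀ * (Uᴴ)ᵀ * Dσ)
        = Dσ * Uᴴ * (A * (Dω * Dω) * Aᵀ) * (Uᴴ)ᵀ * Dσ := by
      noncomm_ring
    rw [key, hDωsq, hTakagi]
    have hUtU : Uᵀ * (Uᴴ)ᵀ = 1 := by
      rw [← transpose_mul, hUU, transpose_one]
    calc Dσ * Uᴴ * (U * Matrix.diagonal (fun i => (σ i : ℂ)) * Uᵀ) * (Uᴴ)ᵀ * Dσ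
        = Dσ * ((Uᴴ * U) * Matrix.diagonal (fun i => (σ i : ℂ)) * (Uᵀ * (Uᴴ)ᵀ)) * Dσ := by
          noncomm_ring
      _ = Dσ * Matrix.diagonal (fun i => (σ i : ℂ)) * Dσ := by
          rw [hUU, hUtU]; noncomm_ring
      _ = 1 := hDsS
  refine ⟨V, mul_eq_one_comm.mp hVVt, ?_⟩
  have hVh : Vᴴ = Dω * Aᴴ * U * Dσ := by
    rw [hV, conjTranspose_mul, conjTranspose_mul, conjTranspose_mul, hDσh, hDωh,
      conjTranspose_conjTranspose]
    noncomm_ring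
  have hmid : Dω * Matrix.diagonal (fun i => ((Real.sqrt (ω₂ i))⁻¹ : ℂ) * ω₁ i *
      ((Real.sqrt (ω₂ i))⁻¹ : ℂ)) * Dω = Matrix.diagonal ω₁ := by
    rw [hDω, diagonal_mul_diagonal, diagonal_mul_diagonal]
    refine congrArg Matrix.diagonal (funext fun i => ?_)
    have hne : (Real.sqrt (ω₂ i) : ℂ) ≠ 0 := by
      exact_mod_cast (Real.sqrt_pos.mpr (hω₂ i)).ne'
    field_simp
  rw [hVh, hV]
  calc Dσ * Uᴴ * (A * Matrix.diagonal ω₁ * Aᴴ) * U * Dσ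
      = Dσ * Uᴴ * A * (Matrix.diagonal ω₁) * (Aᴴ * U * Dσ) := by noncomm_ring
    _ = Dσ * Uᴴ * A * Dω * Matrix.diagonal (fun i => ((Real.sqrt (ω₂ i))⁻¹ : ℂ) * ω₁ i *
          ((Real.sqrt (ω₂ i))⁻¹ : ℂ)) * (Dω * Aᴴ * U * Dσ) := by
        rw [← hmid]; noncomm_ring
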